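/- Let ℓ : ℝ^{d×d'} → ℝ be differentiable, N ≥ 2 an integer, and let W, U, σ, V be a differentiable SVD path on [0,∞) such that for every t ≥ 0, W′(t) = −T_N(U(t), σ(t), V(t), ∇ℓ(W(t))), and such that for each r the map t ↦ u_r(t)ᵀ·∇ℓ(W(t))·v_r(t) is continuous. Then each signed singular value σ_r keeps the sign of its initial value: if σ_r(0) = 0 then σ_r(t) = 0 for all t ≥ 0; if σ_r(0) > 0 then σ_r(t) > 0 for all t ≥ 0; and if σ_r(0) < 0 then σ_r(t) < 0 for all t ≥ 0. In particular, for a non-degenerate factorization (N ≥ 2) singular values never change sign. -/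

import Mathlib

open Matrix

/-- `dpow σ β` is the `k×k` diagonal matrix with `r`-th diagonal entry `(σᵣ²)^β`
(real power, with the convention `x⁰ = 1`). -/
noncomputable def dpow {k : ℕ} (σ : Fin k → ℝ) (β : ℝ) : Matrix (Fin k) (Fin k) ℝ :=
  Matrix.diagonal (fun r => (σ r ^ 2) ^ β)

/-- `TN N U σ V M` is the right-hand side of the gradient-flow dynamics of the product
matrix of a depth-`N` matrix factorization with balanced initialization, expressed
through a singular value decomposition `W = U·diag(σ)·Vᵀ`. -/
noncomputable def TN {d d' k : ℕ} (N : ℕ) (U : Matrix (Fin d) (Fin k) ℝ)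
    (σ : Fin k → ℝ) (V : Matrix (Fin d') (Fin k) ℝ) (M : Matrix (Fin d) (Fin d') ℝ) :
    Matrix (Fin d) (Fin d') ℝ :=
  M * V * dpow σ (((N : ℝ) - 1) / N) * Vᵀ +
  (∑ j ∈ Finset.Icc 2 (N - 1),
    U * dpow σ (((j : ℝ) - 1) / N) * Uᵀ * M * V * dpow σ (((N : ℝ) - (j : ℝ)) / N) * Vᵀ) +
  U * dpow σ (((N : ℝ) - 1) / N) * Uᵀ * M

/-- Derivatives agree on `[0,∞)` by uniqueness of the one-sided derivative. -/
lemma derivIci_unique {f g : ℝ → ℝ} {a b t : ℝ} (ht : (0:ℝ) ≤ t)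
    (hf : HasDerivAt f a t) (hg : HasDerivAt g b t)
    (h : ∀ s, 0 ≤ s → f s = g s) : a = b := by
  have hf' : HasDerivWithinAt f a (Set.Ici 0) t := hf.hasDerivWithinAt
  have hg' : HasDerivWithinAt g b (Set.Ici 0) t := hg.hasDerivWithinAt
  have hf'' : HasDerivWithinAt g a (Set.Ici 0) t :=
    hf'.congr (fun s hs => (h s hs).symm) (h t ht).symm
  have hu : UniqueDiffWithinAt ℝ (Set.Ici (0:ℝ)) t := uniqueDiffOn_Ici 0 t ht
  rw [← hf''.derivWithin hu, ← hg'.derivWithin hu]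

lemma gron_fwd {f f' : ℝ → ℝ} {K b : ℝ} (hb : 0 ≤ b)
    (hd : ∀ x ∈ Set.Icc (0:ℝ) b, HasDerivAt f (f' x) x)
    (hK : ∀ x ∈ Set.Icc (0:ℝ) b, |f' x| ≤ K * |f x|)
    (h0 : f 0 = 0) : f b = 0 := by
  have hc : ContinuousOn f (Set.Icc 0 b) :=
    fun x hx => ((hd x hx).continuousAt).continuousWithinAt
  have hB := norm_le_gronwallBound_of_norm_deriv_right_le (f' := f') (δ := 0) (K := K)
    (ε := 0) hc
    (fun x hx => (hd x (Set.Ico_subset_Icc_self hx)).hasDerivWithinAt)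
    (by simp [h0])
    (fun x hx => by
      simpa [Real.norm_eq_abs] using hK x (Set.Ico_subset_Icc_self hx))
    b (Set.right_mem_Icc.2 hb)
  rw [gronwallBound_ε0_δ0, Real.norm_eq_abs] at hB
  exact abs_nonpos_iff.mp hB

lemma gron_bwd {f f' : ℝ → ℝ} {K b : ℝ} (hb : 0 ≤ b)
    (hd : ∀ x ∈ Set.Icc (0:ℝ) b, HasDerivAt f (f' x) x)
    (hK : ∀ x ∈ Set.Icc (0:ℝ) b, |f' x| ≤ K * |f x|)
    (hbz : f b = 0) : f 0 = 0 := by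
  have hmem : ∀ x ∈ Set.Icc (0:ℝ) b, b - x ∈ Set.Icc (0:ℝ) b := by
    intro x hx; exact ⟨by linarith [hx.2], by linarith [hx.1]⟩
  have key := gron_fwd (f := fun x => f (b - x)) (f' := fun x => -f' (b - x)) (K := K) hb
    (fun x hx => by
      have h1 : HasDerivAt (fun x : ℝ => b - x) (-1) x := (hasDerivAt_id x).const_sub b
      have := (hd (b - x) (hmem x hx)).comp x h1
      simpa [Function.comp_def] using this)
    (fun x hx => by
      simpa using hK (b - x) (hmem x hx))
    (by simpa using hbz)
  simpa using key

lemma sign_preserve {f f' : ℝ → ℝ}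
    (hd : ∀ t, 0 ≤ t → HasDerivAt f (f' t) t)
    (hb : ∀ T, 0 ≤ T → ∃ K, ∀ x ∈ Set.Icc (0:ℝ) T, |f' x| ≤ K * |f x|) :
    (f 0 = 0 → ∀ t, 0 ≤ t → f t = 0) ∧ (0 < f 0 → ∀ t, 0 ≤ t → 0 < f t) ∧
    (f 0 < 0 → ∀ t, 0 ≤ t → f t < 0) := by
  have hdi : ∀ t : ℝ, 0 ≤ t → ∀ x ∈ Set.Icc (0:ℝ) t, HasDerivAt f (f' x) x :=
    fun t _ x hx => hd x hx.1
  have keyb : ∀ t, 0 ≤ t → f t = 0 → f 0 = 0 := by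
    intro t ht hft
    obtain ⟨K, hK⟩ := hb t ht
    exact gron_bwd ht (hdi t ht) hK hft
  have hc : ∀ t : ℝ, 0 ≤ t → ContinuousOn f (Set.Icc 0 t) :=
    fun t _ x hx => ((hd x hx.1).continuousAt).continuousWithinAt
  refine ⟨?_, ?_, ?_⟩
  · intro h0 t ht
    obtain ⟨K, hK⟩ := hb t ht
    exact gron_fwd ht (hdi t ht) hK h0
  · intro h0 t ht
    by_contra hle
    push_neg at hle
    have h0' : (0:ℝ) ∈ Set.Icc (f t) (f 0) := ⟨hle, le_of_lt h0⟩
    obtain ⟨s, hs, hfs⟩ := intermediate_value_Icc' ht (hc t ht) h0'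
    exact absurd (keyb s hs.1 hfs) (ne_of_gt h0)
  · intro h0 t ht
    by_contra hge
    push_neg at hge
    have h0' : (0:ℝ) ∈ Set.Icc (f 0) (f t) := ⟨le_of_lt h0, hge⟩
    obtain ⟨s, hs, hfs⟩ := intermediate_value_Icc ht (hc t ht) h0'
    exact absurd (keyb s hs.1 hfs) (ne_of_lt h0)

lemma TN_entry {d d' k : ℕ} {N : ℕ} (hN : 2 ≤ N)
    {U : Matrix (Fin d) (Fin k) ℝ} {σ : Fin k → ℝ} {V : Matrix (Fin d') (Fin k) ℝ}
    (hU : Uᵀ * U = 1) (hV : Vᵀ * V = 1) (M : Matrix (Fin d) (Fin d') ℝ) (r : Fin k) :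
    (Uᵀ * TN N U σ V M * V) r r
      = N * ((σ r ^ 2) ^ (((N:ℝ) - 1) / N)) * ((Uᵀ * M * V) r r) := by
  have hNR : (2:ℝ) ≤ (N:ℝ) := by exact_mod_cast hN
  set G : Matrix (Fin k) (Fin k) ℝ := Uᵀ * M * V with hG
  have h1 : Uᵀ * (M * V * dpow σ (((N:ℝ)-1)/N) * Vᵀ) * V
      = G * dpow σ (((N:ℝ)-1)/N) := by
    calc Uᵀ * (M * V * dpow σ (((N:ℝ)-1)/N) * Vᵀ) * V
        = Uᵀ * M * V * dpow σ (((N:ℝ)-1)/N) * (Vᵀ * V) := by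
          simp only [Matrix.mul_assoc]
      _ = G * dpow σ (((N:ℝ)-1)/N) := by rw [hV, Matrix.mul_one, hG]
  have h3 : Uᵀ * (U * dpow σ (((N:ℝ)-1)/N) * Uᵀ * M) * V
      = dpow σ (((N:ℝ)-1)/N) * G := by
    calc Uᵀ * (U * dpow σ (((N:ℝ)-1)/N) * Uᵀ * M) * V
        = (Uᵀ * U) * (dpow σ (((N:ℝ)-1)/N) * (Uᵀ * M * V)) := by
          simp only [Matrix.mul_assoc]
      _ = dpow σ (((N:ℝ)-1)/N) * G := by rw [hU, Matrix.one_mul, hG]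
  have h2 : ∀ j ∈ Finset.Icc 2 (N-1),
      Uᵀ * (U * dpow σ (((j:ℝ)-1)/N) * Uᵀ * M * V * dpow σ (((N:ℝ)-(j:ℝ))/N) * Vᵀ) * V
      = dpow σ (((j:ℝ)-1)/N) * G * dpow σ (((N:ℝ)-(j:ℝ))/N) := by
    intro j hj
    calc Uᵀ * (U * dpow σ (((j:ℝ)-1)/N) * Uᵀ * M * V * dpow σ (((N:ℝ)-(j:ℝ))/N) * Vᵀ) * V
        = (Uᵀ * U) * (dpow σ (((j:ℝ)-1)/N) * (Uᵀ * M * V * (dpow σ (((N:ℝ)-(j:ℝ))/N) * (Vᵀ * V)))) := by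
          simp only [Matrix.mul_assoc]
      _ = dpow σ (((j:ℝ)-1)/N) * G * dpow σ (((N:ℝ)-(j:ℝ))/N) := by
          rw [hV, Matrix.mul_one, hU, Matrix.one_mul, hG]
          simp only [Matrix.mul_assoc]
  have expand : Uᵀ * TN N U σ V M * V
      = G * dpow σ (((N:ℝ)-1)/N)
        + (∑ j ∈ Finset.Icc 2 (N-1), dpow σ (((j:ℝ)-1)/N) * G * dpow σ (((N:ℝ)-(j:ℝ))/N))
        + dpow σ (((N:ℝ)-1)/N) * G := by
    rw [TN, Matrix.mul_add, Matrix.mul_add, Matrix.add_mul, Matrix.add_mul, h1, h3,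
      Matrix.mul_sum, Matrix.sum_mul]
    congr 1
    congr 1
    exact Finset.sum_congr rfl h2
  rw [expand]
  have hper : ∀ j ∈ Finset.Icc 2 (N-1),
      (dpow σ (((j:ℝ)-1)/N) * G * dpow σ (((N:ℝ)-(j:ℝ))/N)) r r
      = (σ r ^ 2) ^ (((N:ℝ)-1)/N) * G r r := by
    intro j hj
    simp only [Finset.mem_Icc] at hj
    have hjN : (j:ℝ) ≤ (N:ℝ) - 1 := by
      have : j ≤ N - 1 := hj.2
      have := hN
      have hj' : j + 1 ≤ N := by omega
      have : ((j:ℝ) + 1) ≤ (N:ℝ) := by exact_mod_cast hj'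
      linarith
    have hsum : (((j:ℝ)-1)/N) + (((N:ℝ)-(j:ℝ))/N) = ((N:ℝ)-1)/N := by
      ring
    have hne : (((j:ℝ)-1)/N) + (((N:ℝ)-(j:ℝ))/N) ≠ 0 := by
      rw [hsum]
      have hNpos : (0:ℝ) < (N:ℝ) := by linarith
      have : (0:ℝ) < ((N:ℝ)-1)/N := by
        apply div_pos <;> linarith
      linarith
    rw [dpow, dpow, Matrix.mul_diagonal, Matrix.diagonal_mul]
    have hx : (σ r^2) ^ (((j:ℝ)-1)/N) * (σ r^2) ^ (((N:ℝ)-(j:ℝ))/N)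
        = (σ r^2) ^ (((N:ℝ)-1)/N) := by
      rw [← Real.rpow_add' (by positivity) hne, hsum]
    rw [mul_right_comm, hx]
  have hcard : (Finset.Icc 2 (N-1)).card = N - 2 := by
    rw [Nat.card_Icc]; omega
  simp only [Matrix.add_apply, Matrix.sum_apply]
  rw [Finset.sum_congr rfl hper, Finset.sum_const, hcard]
  rw [dpow, Matrix.mul_diagonal, Matrix.diagonal_mul]
  have hcast : ((N - 2 : ℕ) : ℝ) = (N:ℝ) - 2 := by
    have : (2:ℕ) ≤ N := hN
    push_cast [Nat.cast_sub this]
    ring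
  rw [nsmul_eq_mul, hcast]
  ring

/-- Under the deep-factorization gradient-flow dynamics (depth `N ≥ 2`) along a
differentiable SVD path on `[0, ∞)`, each signed singular value `σᵣ` keeps the sign of
its initial value: singular values never change sign. -/
theorem stmt11 {d d' : ℕ} (N : ℕ) (hN : 2 ≤ N)
    (ℓ : Matrix (Fin d) (Fin d') ℝ → ℝ)
    (gradℓ : Matrix (Fin d) (Fin d') ℝ → Matrix (Fin d) (Fin d') ℝ)
    (hgrad : ∀ Wm H, HasDerivAt (fun s : ℝ => ℓ (Wm + s • H))
      (((gradℓ Wm)ᵀ * H).trace) 0)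
    (W W' : ℝ → Matrix (Fin d) (Fin d') ℝ)
    (U U' : ℝ → Matrix (Fin d) (Fin (min d d')) ℝ)
    (σ σ' : ℝ → Fin (min d d') → ℝ)
    (V V' : ℝ → Matrix (Fin d') (Fin (min d d')) ℝ)
    (hW : ∀ t : ℝ, 0 ≤ t → ∀ p q, HasDerivAt (fun s => W s p q) (W' t p q) t)
    (hU : ∀ t : ℝ, 0 ≤ t → ∀ p q, HasDerivAt (fun s => U s p q) (U' t p q) t)
    (hσ : ∀ t : ℝ, 0 ≤ t → ∀ r, HasDerivAt (fun s => σ s r) (σ' t r) t)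
    (hV : ∀ t : ℝ, 0 ≤ t → ∀ p q, HasDerivAt (fun s => V s p q) (V' t p q) t)
    (hSVD : ∀ t : ℝ, 0 ≤ t → W t = U t * Matrix.diagonal (σ t) * (V t)ᵀ)
    (hUorth : ∀ t : ℝ, 0 ≤ t → (U t)ᵀ * U t = 1)
    (hVorth : ∀ t : ℝ, 0 ≤ t → (V t)ᵀ * V t = 1)
    (hdyn : ∀ t : ℝ, 0 ≤ t → W' t = -TN N (U t) (σ t) (V t) (gradℓ (W t)))
    (hcont : ∀ r, ContinuousOn
      (fun t => ((U t)ᵀ * gradℓ (W t) * V t) r r) (Set.Ici 0)) :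
    ∀ r, (σ 0 r = 0 → ∀ t : ℝ, 0 ≤ t → σ t r = 0) ∧
         (0 < σ 0 r → ∀ t : ℝ, 0 ≤ t → 0 < σ t r) ∧
         (σ 0 r < 0 → ∀ t : ℝ, 0 ≤ t → σ t r < 0) := by
  intro r
  have hNR : (2:ℝ) ≤ (N:ℝ) := by exact_mod_cast hN
  set β : ℝ := ((N:ℝ) - 1) / N with hβ
  set g : ℝ → ℝ := fun t => ((U t)ᵀ * gradℓ (W t) * V t) r r with hg
  -- Step A : orthogonality of columns and their derivatives
  have hU0 : ∀ t, 0 ≤ t → (∑ p, U' t p r * U t p r) = 0 := by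
    intro t ht
    have hψ : HasDerivAt (fun s => ∑ p, U s p r * U s p r)
        (∑ p, (U' t p r * U t p r + U t p r * U' t p r)) t :=
      HasDerivAt.fun_sum fun p _ => (hU t ht p r).mul (hU t ht p r)
    have heq : ∀ s, 0 ≤ s → (∑ p, U s p r * U s p r) = (fun _ : ℝ => (1:ℝ)) s := by
      intro s hs
      have h1 : (∑ p, U s p r * U s p r) = ((U s)ᵀ * U s) r r := by
        simp [Matrix.mul_apply, Matrix.transpose_apply]
      rw [h1, hUorth s hs, Matrix.one_apply_eq]
    have h0 := derivIci_unique ht hψ (hasDerivAt_const t (1:ℝ)) heq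
    have h2 : (∑ p, (U' t p r * U t p r + U t p r * U' t p r))
        = 2 * ∑ p, U' t p r * U t p r := by
      rw [Finset.sum_add_distrib, two_mul]
      congr 1
      exact Finset.sum_congr rfl fun p _ => mul_comm _ _
    rw [h2] at h0
    linarith
  have hV0 : ∀ t, 0 ≤ t → (∑ q, V' t q r * V t q r) = 0 := by
    intro t ht
    have hψ : HasDerivAt (fun s => ∑ q, V s q r * V s q r)
        (∑ q, (V' t q r * V t q r + V t q r * V' t q r)) t :=
      HasDerivAt.fun_sum fun q _ => (hV t ht q r).mul (hV t ht q r)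
    have heq : ∀ s, 0 ≤ s → (∑ q, V s q r * V s q r) = (fun _ : ℝ => (1:ℝ)) s := by
      intro s hs
      have h1 : (∑ q, V s q r * V s q r) = ((V s)ᵀ * V s) r r := by
        simp [Matrix.mul_apply, Matrix.transpose_apply]
      rw [h1, hVorth s hs, Matrix.one_apply_eq]
    have h0 := derivIci_unique ht hψ (hasDerivAt_const t (1:ℝ)) heq
    have h2 : (∑ q, (V' t q r * V t q r + V t q r * V' t q r))
        = 2 * ∑ q, V' t q r * V t q r := by
      rw [Finset.sum_add_distrib, two_mul]
      congr 1
      exact Finset.sum_congr rfl fun q _ => mul_comm _ _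
    rw [h2] at h0
    linarith
  -- Step B : ODE for σ r
  have hode : ∀ t, 0 ≤ t → σ' t r = -((N:ℝ) * (σ t r ^ 2) ^ β * g t) := by
    intro t ht
    have hφ : HasDerivAt (fun s => ∑ q, ∑ p, U s p r * W s p q * V s q r)
        (∑ q, ∑ p, (U' t p r * W t p q * V t q r + U t p r * W' t p q * V t q r
          + U t p r * W t p q * V' t q r)) t := by
      refine HasDerivAt.fun_sum fun q _ => HasDerivAt.fun_sum fun p _ => ?_
      have h := ((hU t ht p r).fun_mul (hW t ht p q)).fun_mul (hV t ht q r)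
      convert h using 1
      · rfl
      ring
    have hφeq : ∀ s, 0 ≤ s →
        (∑ q, ∑ p, U s p r * W s p q * V s q r) = (fun u => σ u r) s := by
      intro s hs
      have h1 : (∑ q, ∑ p, U s p r * W s p q * V s q r)
          = ((U s)ᵀ * W s * V s) r r := by
        simp [Matrix.mul_apply, Matrix.transpose_apply, Finset.sum_mul, mul_assoc]
      have h2 : (U s)ᵀ * W s * V s = Matrix.diagonal (σ s) := by
        rw [hSVD s hs]
        calc (U s)ᵀ * (U s * Matrix.diagonal (σ s) * (V s)ᵀ) * V s
            = ((U s)ᵀ * U s) * (Matrix.diagonal (σ s) * ((V s)ᵀ * V s)) := by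
              simp only [Matrix.mul_assoc]
          _ = Matrix.diagonal (σ s) := by
              rw [hUorth s hs, hVorth s hs, Matrix.one_mul, Matrix.mul_one]
      rw [h1, h2, Matrix.diagonal_apply_eq]
    have hder := derivIci_unique ht hφ (hσ t ht r) hφeq
    -- split the derivative into three matrix entries
    have hsplit : (∑ q, ∑ p, (U' t p r * W t p q * V t q r
          + U t p r * W' t p q * V t q r + U t p r * W t p q * V' t q r))
        = ((U' t)ᵀ * W t * V t) r r + ((U t)ᵀ * W' t * V t) r r
          + ((U t)ᵀ * W t * V' t) r r := by
      simp [Matrix.mul_apply, Matrix.transpose_apply, Finset.sum_mul, mul_assoc,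
        Finset.sum_add_distrib]
    -- term 1
    have hterm1 : ((U' t)ᵀ * W t * V t) r r = 0 := by
      have h2 : (U' t)ᵀ * W t * V t = (U' t)ᵀ * U t * Matrix.diagonal (σ t) := by
        rw [hSVD t ht]
        calc (U' t)ᵀ * (U t * Matrix.diagonal (σ t) * (V t)ᵀ) * V t
            = (U' t)ᵀ * (U t * (Matrix.diagonal (σ t) * ((V t)ᵀ * V t))) := by
              simp only [Matrix.mul_assoc]
          _ = (U' t)ᵀ * U t * Matrix.diagonal (σ t) := by
              rw [hVorth t ht, Matrix.mul_one, Matrix.mul_assoc]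
      rw [h2, Matrix.mul_diagonal]
      have : ((U' t)ᵀ * U t) r r = ∑ p, U' t p r * U t p r := by
        simp [Matrix.mul_apply, Matrix.transpose_apply]
      rw [this, hU0 t ht, zero_mul]
    -- term 3
    have hterm3 : ((U t)ᵀ * W t * V' t) r r = 0 := by
      have h2 : (U t)ᵀ * W t * V' t = Matrix.diagonal (σ t) * ((V t)ᵀ * V' t) := by
        rw [hSVD t ht]
        calc (U t)ᵀ * (U t * Matrix.diagonal (σ t) * (V t)ᵀ) * V' t
            = ((U t)ᵀ * U t) * (Matrix.diagonal (σ t) * ((V t)ᵀ * V' t)) := by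
              simp only [Matrix.mul_assoc]
          _ = Matrix.diagonal (σ t) * ((V t)ᵀ * V' t) := by
              rw [hUorth t ht, Matrix.one_mul]
      rw [h2, Matrix.diagonal_mul]
      have : ((V t)ᵀ * V' t) r r = ∑ q, V' t q r * V t q r := by
        simp [Matrix.mul_apply, Matrix.transpose_apply]
        exact Finset.sum_congr rfl fun q _ => mul_comm _ _
      rw [this, hV0 t ht, mul_zero]
    -- term 2
    have hterm2 : ((U t)ᵀ * W' t * V t) r r = -((N:ℝ) * (σ t r ^ 2) ^ β * g t) := by
      rw [hdyn t ht]
      have : (U t)ᵀ * (-TN N (U t) (σ t) (V t) (gradℓ (W t))) * V t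
          = -((U t)ᵀ * TN N (U t) (σ t) (V t) (gradℓ (W t)) * V t) := by
        rw [Matrix.mul_neg, Matrix.neg_mul]
      rw [this, Matrix.neg_apply, TN_entry hN (hUorth t ht) (hVorth t ht)]
    rw [← hder, hsplit, hterm1, hterm2, hterm3]
    ring
  -- Step C : apply sign preservation
  have main := sign_preserve (f := fun t => σ t r) (f' := fun t => σ' t r)
    (fun t ht => hσ t ht r) ?_
  · exact ⟨main.1, main.2.1, main.2.2⟩
  · intro T hT
    have hfc : ContinuousOn (fun t => σ t r) (Set.Icc 0 T) :=
      fun x hx => ((hσ x hx.1 r).continuousAt).continuousWithinAt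
    have hgc : ContinuousOn g (Set.Icc 0 T) := (hcont r).mono (fun x hx => hx.1)
    obtain ⟨Mf, hMf⟩ := (isCompact_Icc).exists_bound_of_continuousOn hfc
    obtain ⟨Mg, hMg⟩ := (isCompact_Icc).exists_bound_of_continuousOn hgc
    set e : ℝ := ((N:ℝ) - 2) / N with he
    have hNpos : (0:ℝ) < (N:ℝ) := by linarith
    have he0 : 0 ≤ e := div_nonneg (by linarith) (by linarith)
    refine ⟨(N:ℝ) * (max Mf 0) ^ e * (max Mg 0), fun x hx => ?_⟩
    have hfb : |σ x r| ≤ max Mf 0 := by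
      have := hMf x hx
      rw [Real.norm_eq_abs] at this
      exact le_trans this (le_max_left _ _)
    have hgb : |g x| ≤ max Mg 0 := by
      have := hMg x hx
      rw [Real.norm_eq_abs] at this
      exact le_trans this (le_max_left _ _)
    show |σ' x r| ≤ (N:ℝ) * (max Mf 0) ^ e * (max Mg 0) * |σ x r|
    rw [hode x hx.1, abs_neg, abs_mul, abs_mul]
    have habs1 : |(N:ℝ)| = (N:ℝ) := abs_of_nonneg (by linarith)
    have habs2 : |(σ x r ^ 2) ^ β| = (σ x r ^ 2) ^ β :=
      abs_of_nonneg (Real.rpow_nonneg (sq_nonneg _) _)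
    rw [habs1, habs2]
    -- (σ²)^β = |σ|^e * |σ|
    have hpow : (σ x r ^ 2) ^ β = |σ x r| ^ e * |σ x r| := by
      have h1 : (σ x r ^ 2 : ℝ) = |σ x r| ^ (2:ℕ) := (sq_abs _).symm
      rw [h1, ← Real.rpow_natCast |σ x r| 2, ← Real.rpow_mul (abs_nonneg _)]
      have h2 : (2:ℝ) * β = e + 1 := by
        rw [hβ, he]
        field_simp
        ring
      rw [Nat.cast_ofNat, h2, Real.rpow_add' (abs_nonneg _) (by positivity), Real.rpow_one]
    rw [hpow]
    have hpe : |σ x r| ^ e ≤ (max Mf 0) ^ e :=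
      Real.rpow_le_rpow (abs_nonneg _) hfb he0
    calc (N:ℝ) * (|σ x r| ^ e * |σ x r|) * |g x|
        = ((N:ℝ) * |σ x r| ^ e * |g x|) * |σ x r| := by ring
      _ ≤ ((N:ℝ) * (max Mf 0) ^ e * (max Mg 0)) * |σ x r| := by
          apply mul_le_mul_of_nonneg_right _ (abs_nonneg _)
          have hN0 : (0:ℝ) ≤ (N:ℝ) := by linarith
          exact mul_le_mul (mul_le_mul_of_nonneg_left hpe hN0) hgb (abs_nonneg _)
            (by positivity)
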